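/- Let a_0, a_1 be elements of a commutative ring with unity, and let n ≥ 1 and k ≥ 1. Then R(x; (a_0·I_n + a_1·P_n) ⊗ J_k) = Σ over all pairs of vectors (l_1^{(1)},…,l_n^{(1)}), (l_1^{(2)},…,l_n^{(2)}) ∈ {0,1,…,k}^n satisfying l_i^{(2)} ≤ min(k − l_i^{(1)}, k − l_{(i mod n)+1}^{(1)}) for 1 ≤ i ≤ n, of [ Π_{i=1}^{n} C(k, l_i^{(1)}) · C(k − l_{(i mod n)+1}^{(1)}, l_i^{(2)}) · C(k, l_i^{(1)} + l_i^{(2)}) · (l_i^{(1)} + l_i^{(2)})! ] · a_0^{Σ_{i=1}^n l_i^{(1)}} · a_1^{Σ_{i=1}^n l_i^{(2)}} · x^{Σ_{i=1}^n (l_i^{(1)} + l_i^{(2)})}. -/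

import Mathlib

open scoped BigOperators
open Kronecker

/-- The rook polynomial `R(x;A)` of a rectangular matrix, evaluated at a ring element `x`:
`R(x;A) = ∑_{S ⊆ rows} ∑_{σ : S ↪ cols} x^{|S|} ∏_{i ∈ S} A i (σ i)`
(the empty set contributes the constant term `1`). -/
noncomputable def rookPoly {R : Type*} [CommRing R] {ι κ : Type*} [Fintype ι] [Fintype κ]
    [DecidableEq ι] [DecidableEq κ] (x : R) (A : Matrix ι κ R) : R :=
  ∑ S : Finset ι, ∑ σ : {i // i ∈ S} ↪ κ, x ^ S.card * ∏ i : {i // i ∈ S}, A i.1 (σ i)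

/-- The `n × n` circulant `(0,1)` matrix `P_n`, with `(i,j)` entry `1` iff `j − i ≡ 1 (mod n)`. -/
def Pcirc (R : Type*) [CommRing R] (n : ℕ) [NeZero n] : Matrix (Fin n) (Fin n) R :=
  Matrix.of fun i j => if j = i + 1 then 1 else 0

open Finset

namespace RookAux
open scoped Classical

variable {R : Type*} [CommRing R] {n k : ℕ} [NeZero n]

/-- color-annotated placement factor -/
def wfac (x a0 a1 : R) : Option (Bool × Fin k) → R
  | none => 1
  | some (false, _) => x * a0
  | some (true, _) => x * a1

def colOf (i : Fin n) (c : Bool × Fin k) : Fin n × Fin k :=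
  (if c.1 then i + 1 else i, c.2)

def Gmap (π : Fin n → Fin k → Option (Bool × Fin k)) :
    Fin n × Fin k → Option (Fin n × Fin k) :=
  fun a => (π a.1 a.2).map (colOf a.1)

def Good (π : Fin n → Fin k → Option (Bool × Fin k)) : Prop :=
  ∀ a b c, Gmap π a = some c → Gmap π b = some c → a = b

noncomputable def W (x a0 a1 : R) (π : Fin n → Fin k → Option (Bool × Fin k)) : R :=
  ∏ i, ∏ p, wfac x a0 a1 (π i p)

def img (ε : Bool) (g : Fin k → Option (Bool × Fin k)) : Finset (Fin k) :=
  univ.filter fun q => ∃ p, g p = some (ε, q)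

def injC (ε : Bool) (g : Fin k → Option (Bool × Fin k)) : Prop :=
  ∀ ⦃p p' q⦄, g p = some (ε, q) → g p' = some (ε, q) → p = p'

lemma mem_img {ε : Bool} {g : Fin k → Option (Bool × Fin k)} {q : Fin k} :
    q ∈ img ε g ↔ ∃ p, g p = some (ε, q) := by simp [img]

/-- Good decomposes into per-block conditions. -/
lemma good_iff (π : Fin n → Fin k → Option (Bool × Fin k)) :
    Good π ↔ ∀ i, injC false (π i) ∧ injC true (π i) ∧
      ∀ q, q ∈ img true (π i) → q ∉ img false (π (i + 1)) := by
  constructor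
  · intro h i
    refine ⟨?_, ?_, ?_⟩
    · intro p p' q hp hp'
      have := h (i, p) (i, p') (i, q) (by simp [Gmap, hp, colOf]) (by simp [Gmap, hp', colOf])
      exact (Prod.ext_iff.1 this).2
    · intro p p' q hp hp'
      have := h (i, p) (i, p') (i + 1, q) (by simp [Gmap, hp, colOf]) (by simp [Gmap, hp', colOf])
      exact (Prod.ext_iff.1 this).2
    · intro q hq hq'
      obtain ⟨p, hp⟩ := mem_img.1 hq
      obtain ⟨p', hp'⟩ := mem_img.1 hq'
      have := h (i, p) (i + 1, p') (i + 1, q) (by simp [Gmap, hp, colOf])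
        (by simp [Gmap, hp', colOf])
      rw [Prod.mk.injEq] at this
      obtain ⟨h1, h2⟩ := this
      rw [← h1, ← h2, hp] at hp'
      simp at hp'
  · rintro h ⟨i, p⟩ ⟨i', p'⟩ ⟨j, q⟩ ha hb
    simp only [Gmap, Option.map_eq_some_iff] at ha hb
    obtain ⟨⟨ε, qa⟩, hga, hca⟩ := ha
    obtain ⟨⟨ε', qb⟩, hgb, hcb⟩ := hb
    simp only [colOf, Prod.mk.injEq] at hca hcb
    obtain ⟨hja, hqa⟩ := hca
    obtain ⟨hjb, hqb⟩ := hcb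
    subst hqa; subst hqb
    cases ε <;> cases ε' <;> simp only [if_true, if_false, Bool.false_eq_true] at hja hjb <;>
      [skip; skip; skip; skip]
    · rw [← hjb] at hja; subst hja
      exact Prod.ext rfl ((h i).1 hga hgb)
    · exfalso
      have hii : i' + 1 = i := hjb.trans hja.symm
      refine (h i').2.2 qb (mem_img.2 ⟨p', hgb⟩) (mem_img.2 ⟨p, ?_⟩)
      rw [hii]; exact hga
    · exfalso
      have hii : i + 1 = i' := hja.trans hjb.symm
      refine (h i).2.2 qb (mem_img.2 ⟨p, hga⟩) (mem_img.2 ⟨p', ?_⟩)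
      rw [hii]; exact hgb
    · have hii : i = i' := add_right_cancel (hja.trans hjb.symm)
      subst hii
      exact Prod.ext rfl ((h i).2.1 hga hgb)


instance : DecidablePred (fun π : Fin n → Fin k → Option (Bool × Fin k) => Good π) :=
  fun π => decidable_of_iff (∀ a b c, Gmap π a = some c → Gmap π b = some c → a = b) Iff.rfl

lemma card_dom_eq_card_img {ε : Bool} {g : Fin k → Option (Bool × Fin k)} (h : injC ε g) :
    (univ.filter fun p => ∃ q, g p = some (ε, q)).card = (img ε g).card := by
  symm
  apply Finset.card_bij (fun q hq => (mem_img.1 hq).choose)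
  · intro q hq
    simp only [mem_filter, mem_univ, true_and]
    exact ⟨q, (mem_img.1 hq).choose_spec⟩
  · intro q hq q' hq' heq
    have h1 := (mem_img.1 hq).choose_spec
    have h2 := (mem_img.1 hq').choose_spec
    rw [heq] at h1
    rw [h1] at h2
    exact (by simpa using h2 : q = q')
  · intro p hp
    obtain ⟨q, hq⟩ := (mem_filter.1 hp).2
    refine ⟨q, mem_img.2 ⟨p, hq⟩, ?_⟩
    exact h (mem_img.1 (mem_img.2 ⟨p, hq⟩)).choose_spec hq

lemma block_prod (x a0 a1 : R) (g : Fin k → Option (Bool × Fin k))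
    (hf : injC false g) (ht : injC true g) :
    ∏ p, wfac x a0 a1 (g p)
      = (x * a0) ^ (img false g).card * (x * a1) ^ (img true g).card := by
  rw [← card_dom_eq_card_img hf, ← card_dom_eq_card_img ht]
  rw [← Finset.prod_filter_mul_prod_filter_not univ (fun p => ∃ q, g p = some (false, q))]
  congr 1
  · rw [Finset.prod_congr rfl (g := fun _ => x * a0) ?_, Finset.prod_const]
    intro p hp
    obtain ⟨q, hq⟩ := (mem_filter.1 hp).2
    simp [wfac, hq]
  · rw [← Finset.prod_filter_mul_prod_filter_not
      (univ.filter fun p => ¬∃ q, g p = some (false, q)) (fun p => ∃ q, g p = some (true, q))]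
    have hone : ∀ p ∈ ((univ.filter fun p => ¬∃ q, g p = some (false, q)).filter
        fun p => ¬∃ q, g p = some (true, q)), wfac x a0 a1 (g p) = 1 := by
      intro p hp
      simp only [mem_filter] at hp
      obtain ⟨⟨_, h0⟩, h1⟩ := hp
      match hgp : g p with
      | none => simp [wfac]
      | some (false, q) => exact absurd ⟨q, hgp⟩ h0
      | some (true, q) => exact absurd ⟨q, hgp⟩ h1
    rw [Finset.prod_eq_one hone, mul_one]
    have hset : ((univ.filter fun p => ¬∃ q, g p = some (false, q)).filter
        fun p => ∃ q, g p = some (true, q)) = univ.filter fun p => ∃ q, g p = some (true, q) := by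
      rw [Finset.filter_filter]
      apply Finset.filter_congr
      intro p _
      constructor
      · rintro ⟨_, h⟩; exact h
      · rintro ⟨q, hq⟩
        exact ⟨by simp [hq], ⟨q, hq⟩⟩
    rw [hset]
    rw [Finset.prod_congr rfl (g := fun _ => x * a1) ?_, Finset.prod_const]
    intro p hp
    obtain ⟨q, hq⟩ := (mem_filter.1 hp).2
    simp [wfac, hq]

noncomputable def profF (π : Fin n → Fin k → Option (Bool × Fin k)) :
    (Fin n → Fin (k + 1)) × (Fin n → Fin (k + 1)) :=
  (fun i => ⟨(img false (π i)).card, Nat.lt_succ_of_le (le_trans (Finset.card_le_univ _) (le_of_eq (Fintype.card_fin k)))⟩,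
   fun i => ⟨(img true (π i)).card, Nat.lt_succ_of_le (le_trans (Finset.card_le_univ _) (le_of_eq (Fintype.card_fin k)))⟩)

noncomputable def monoF (x a0 a1 : R) (l : (Fin n → Fin (k + 1)) × (Fin n → Fin (k + 1))) : R :=
  ∏ i, (x * a0) ^ ((l.1 i : ℕ)) * (x * a1) ^ ((l.2 i : ℕ))

lemma W_eq_mono (x a0 a1 : R) {π : Fin n → Fin k → Option (Bool × Fin k)} (h : Good π) :
    W x a0 a1 π = monoF x a0 a1 (profF π) := by
  rw [good_iff] at h
  unfold W monoF profF
  exact Finset.prod_congr rfl fun i _ => block_prod x a0 a1 (π i) (h i).1 (h i).2.1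

lemma grouping (x a0 a1 : R) :
    ∑ π ∈ univ.filter (fun π : Fin n → Fin k → Option (Bool × Fin k) => Good π), W x a0 a1 π
      = ∑ l : (Fin n → Fin (k + 1)) × (Fin n → Fin (k + 1)),
          ((univ.filter fun π : Fin n → Fin k → Option (Bool × Fin k) =>
              Good π ∧ profF π = l).card : R) * monoF x a0 a1 l := by
  classical
  rw [Finset.sum_congr rfl (fun π hπ => W_eq_mono x a0 a1 (Finset.mem_filter.1 hπ).2)]
  rw [Finset.sum_comp (monoF x a0 a1) profF]
  rw [← Finset.sum_subset (Finset.subset_univ ((univ.filter (fun π : Fin n → Fin k → Option (Bool × Fin k) => Good π)).image profF)) ?_]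
  · apply Finset.sum_congr rfl
    intro l _
    rw [Finset.filter_filter, nsmul_eq_mul]
  · intro l _ hl
    have he : (univ.filter fun π : Fin n → Fin k → Option (Bool × Fin k) =>
        Good π ∧ profF π = l) = ∅ := by
      rw [Finset.filter_eq_empty_iff]
      rintro π _ ⟨hg, hp⟩
      exact hl (Finset.mem_image.2 ⟨π, Finset.mem_filter.2 ⟨Finset.mem_univ _, hg⟩, hp⟩)
    rw [he]
    simp


def colval (A Q2 : Finset (Fin k)) : (↥A ⊕ ↥Q2) → Bool × Fin k
  | Sum.inl a => (false, a.1)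
  | Sum.inr b => (true, b.1)

lemma colval_injective (A Q2 : Finset (Fin k)) : Function.Injective (colval A Q2) := by
  rintro (a | a) (b | b) h <;> simp [colval] at h <;> simp [h]

noncomputable def embToPl (A Q2 : Finset (Fin k)) (e : (↥A ⊕ ↥Q2) ↪ Fin k) :
    Fin k → Option (Bool × Fin k) :=
  fun p => if h : ∃ y, e y = p then some (colval A Q2 h.choose) else none

lemma embToPl_apply (A Q2 : Finset (Fin k)) (e : (↥A ⊕ ↥Q2) ↪ Fin k) (y : ↥A ⊕ ↥Q2) :
    embToPl A Q2 e (e y) = some (colval A Q2 y) := by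
  unfold embToPl
  have h : ∃ y', e y' = e y := ⟨y, rfl⟩
  rw [dif_pos h]
  exact congrArg _ (congrArg _ (e.injective h.choose_spec))

lemma embToPl_eq_some {A Q2 : Finset (Fin k)} {e : (↥A ⊕ ↥Q2) ↪ Fin k} {p : Fin k}
    {c : Bool × Fin k} :
    embToPl A Q2 e p = some c ↔ ∃ y, e y = p ∧ colval A Q2 y = c := by
  unfold embToPl
  split_ifs with h
  · simp only [Option.some.injEq]
    constructor
    · intro hc
      exact ⟨h.choose, h.choose_spec, hc⟩
    · rintro ⟨y, hy, rfl⟩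
      exact congrArg _ (e.injective (h.choose_spec.trans hy.symm))
  · constructor
    · intro hx; cases hx
    · rintro ⟨y, hy, -⟩
      exact absurd ⟨y, hy⟩ h

lemma embToPl_injC (A Q2 : Finset (Fin k)) (e : (↥A ⊕ ↥Q2) ↪ Fin k) (ε : Bool) :
    injC ε (embToPl A Q2 e) := by
  intro p p' q hp hp'
  obtain ⟨y, hy, hc⟩ := embToPl_eq_some.1 hp
  obtain ⟨y', hy', hc'⟩ := embToPl_eq_some.1 hp'
  have : y = y' := colval_injective _ _ (hc.trans hc'.symm)
  rw [← hy, ← hy', this]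

lemma embToPl_img_false (A Q2 : Finset (Fin k)) (e : (↥A ⊕ ↥Q2) ↪ Fin k) :
    img false (embToPl A Q2 e) = A := by
  ext q
  rw [mem_img]
  constructor
  · rintro ⟨p, hp⟩
    obtain ⟨y, hy, hc⟩ := embToPl_eq_some.1 hp
    match y with
    | Sum.inl a =>
      have : a.1 = q := by simpa [colval] using hc
      exact this ▸ a.2
    | Sum.inr b => simp [colval] at hc
  · intro hq
    exact ⟨e (Sum.inl ⟨q, hq⟩), by rw [embToPl_apply]; rfl⟩

lemma embToPl_img_true (A Q2 : Finset (Fin k)) (e : (↥A ⊕ ↥Q2) ↪ Fin k) :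
    img true (embToPl A Q2 e) = Q2 := by
  ext q
  rw [mem_img]
  constructor
  · rintro ⟨p, hp⟩
    obtain ⟨y, hy, hc⟩ := embToPl_eq_some.1 hp
    match y with
    | Sum.inr b =>
      have : b.1 = q := by simpa [colval] using hc
      exact this ▸ b.2
    | Sum.inl a => simp [colval] at hc
  · intro hq
    exact ⟨e (Sum.inr ⟨q, hq⟩), by rw [embToPl_apply]; rfl⟩

lemma card_exact (A Q2 : Finset (Fin k)) :
    Fintype.card {g : Fin k → Option (Bool × Fin k) //
        img false g = A ∧ img true g = Q2 ∧ injC false g ∧ injC true g}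
      = Nat.descFactorial k (A.card + Q2.card) := by
  have hcard : Fintype.card ((↥A ⊕ ↥Q2) ↪ Fin k) = Nat.descFactorial k (A.card + Q2.card) := by
    rw [Fintype.card_embedding_eq]
    simp
  rw [← hcard]
  symm
  apply Fintype.card_of_bijective (f := fun e : (↥A ⊕ ↥Q2) ↪ Fin k =>
    (⟨embToPl A Q2 e, embToPl_img_false A Q2 e, embToPl_img_true A Q2 e,
      embToPl_injC A Q2 e false, embToPl_injC A Q2 e true⟩ :
      {g : Fin k → Option (Bool × Fin k) //
        img false g = A ∧ img true g = Q2 ∧ injC false g ∧ injC true g}))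
  constructor
  · intro e e' h
    have hval : embToPl A Q2 e = embToPl A Q2 e' := congrArg Subtype.val h
    apply DFunLike.ext
    intro y
    have h1 : embToPl A Q2 e' (e y) = some (colval A Q2 y) := by
      rw [← hval, embToPl_apply]
    obtain ⟨y', hy', hc'⟩ := embToPl_eq_some.1 h1
    have : y' = y := colval_injective _ _ hc'
    rw [← hy', this]
  · rintro ⟨g, hA, hQ, hf, ht⟩
    have hex : ∀ y : ↥A ⊕ ↥Q2, ∃ p, g p = some (colval A Q2 y) := by
      rintro (a | b)
      · have : (a : Fin k) ∈ img false g := by rw [hA]; exact a.2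
        exact mem_img.1 this
      · have : (b : Fin k) ∈ img true g := by rw [hQ]; exact b.2
        exact mem_img.1 this
    have einj : Function.Injective (fun y => (hex y).choose) := by
      intro y y' hyy
      have h1 := (hex y).choose_spec
      have h2 := (hex y').choose_spec
      simp only at hyy
      rw [hyy, h2] at h1
      exact colval_injective _ _ (by simpa using h1.symm)
    refine ⟨⟨fun y => (hex y).choose, einj⟩, ?_⟩
    apply Subtype.ext
    funext p
    simp only
    match hgp : g p with
    | none =>
      rw [show embToPl A Q2 ⟨fun y => (hex y).choose, einj⟩ p = none from ?_]
      unfold embToPl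
      rw [dif_neg]
      rintro ⟨y, hy⟩
      have := (hex y).choose_spec
      simp only [Function.Embedding.coeFn_mk] at hy
      rw [hy, hgp] at this
      cases this
    | some c =>
      obtain ⟨ε, q⟩ := c
      have hy : ∃ y, (⟨fun y => (hex y).choose, einj⟩ : (↥A ⊕ ↥Q2) ↪ Fin k) y = p := by
        match ε with
        | false =>
          have hqA : q ∈ A := by rw [← hA]; exact mem_img.2 ⟨p, hgp⟩
          refine ⟨Sum.inl ⟨q, hqA⟩, ?_⟩
          have := (hex (Sum.inl ⟨q, hqA⟩)).choose_spec
          exact hf this hgp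
        | true =>
          have hqA : q ∈ Q2 := by rw [← hQ]; exact mem_img.2 ⟨p, hgp⟩
          refine ⟨Sum.inr ⟨q, hqA⟩, ?_⟩
          have := (hex (Sum.inr ⟨q, hqA⟩)).choose_spec
          exact ht this hgp
      unfold embToPl
      rw [dif_pos hy]
      have hsp := (hex hy.choose).choose_spec
      have hcs : (⟨fun y => (hex y).choose, einj⟩ : (↥A ⊕ ↥Q2) ↪ Fin k) hy.choose = p :=
        hy.choose_spec
      simp only [Function.Embedding.coeFn_mk] at hcs
      rw [hcs, hgp] at hsp
      exact hsp.symm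


lemma card_subsets (B : Finset (Fin k)) (m : ℕ) :
    Fintype.card {s : Finset (Fin k) // s ⊆ B ∧ s.card = m} = B.card.choose m := by
  rw [Fintype.card_subtype]
  rw [show univ.filter (fun s : Finset (Fin k) => s ⊆ B ∧ s.card = m)
      = Finset.powersetCard m B from ?_]
  · exact Finset.card_powersetCard m B
  · ext s
    simp [Finset.mem_powersetCard]

lemma card_cardsets (m : ℕ) :
    Fintype.card {s : Finset (Fin k) // s.card = m} = k.choose m := by
  rw [Fintype.card_subtype]
  rw [show univ.filter (fun s : Finset (Fin k) => s.card = m)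
      = Finset.powersetCard m (univ : Finset (Fin k)) from ?_]
  · rw [Finset.card_powersetCard]
    simp
  · ext s
    simp [Finset.mem_powersetCard]

/-- the set of block placements with given diagonal image `A`, off-diagonal image inside `B`
of size `m2` -/
lemma card_BL (A B : Finset (Fin k)) (m2 : ℕ) :
    Fintype.card {g : Fin k → Option (Bool × Fin k) //
        img false g = A ∧ injC false g ∧ img true g ⊆ B ∧ injC true g ∧ (img true g).card = m2}
      = B.card.choose m2 * Nat.descFactorial k (A.card + m2) := by
  classical
  have e1 := Equiv.sigmaFiberEquiv (f := fun gg : {g : Fin k → Option (Bool × Fin k) //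
      img false g = A ∧ injC false g ∧ img true g ⊆ B ∧ injC true g ∧ (img true g).card = m2} =>
    (⟨img true gg.1, gg.2.2.2.1, gg.2.2.2.2.2⟩ : {s : Finset (Fin k) // s ⊆ B ∧ s.card = m2}))
  rw [← Fintype.card_congr e1, Fintype.card_sigma]
  have e2 : ∀ Q2 : {s : Finset (Fin k) // s ⊆ B ∧ s.card = m2},
      Fintype.card {gg : {g : Fin k → Option (Bool × Fin k) //
          img false g = A ∧ injC false g ∧ img true g ⊆ B ∧ injC true g ∧ (img true g).card = m2} //
            (⟨img true gg.1, gg.2.2.2.1, gg.2.2.2.2.2⟩ :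
              {s : Finset (Fin k) // s ⊆ B ∧ s.card = m2}) = Q2}
        = Nat.descFactorial k (A.card + m2) := by
    intro Q2
    have equ : {gg : {g : Fin k → Option (Bool × Fin k) //
          img false g = A ∧ injC false g ∧ img true g ⊆ B ∧ injC true g ∧ (img true g).card = m2} //
            (⟨img true gg.1, gg.2.2.2.1, gg.2.2.2.2.2⟩ :
              {s : Finset (Fin k) // s ⊆ B ∧ s.card = m2}) = Q2}
        ≃ {g : Fin k → Option (Bool × Fin k) //
            img false g = A ∧ img true g = Q2.1 ∧ injC false g ∧ injC true g} := by
      refine ⟨fun gg => ⟨gg.1.1, gg.1.2.1, congrArg Subtype.val gg.2, gg.1.2.2.1,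
        gg.1.2.2.2.2.1⟩, fun g => ⟨⟨g.1, g.2.1, g.2.2.2.1, ?_, g.2.2.2.2, ?_⟩, ?_⟩, ?_, ?_⟩
      · rw [g.2.2.1]; exact Q2.2.1
      · rw [g.2.2.1]; exact Q2.2.2
      · exact Subtype.ext g.2.2.1
      · intro gg
        apply Subtype.ext
        apply Subtype.ext
        rfl
      · intro g
        apply Subtype.ext
        rfl
    rw [Fintype.card_congr equ, card_exact]
    congr 1
    rw [Q2.2.2]
  rw [Finset.sum_congr rfl (fun Q2 _ => e2 Q2), Finset.sum_const]
  rw [Finset.card_univ, card_subsets, smul_eq_mul]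

lemma card_Qfam (l1 : Fin n → ℕ) :
    Fintype.card {Q : Fin n → Finset (Fin k) // ∀ i, (Q i).card = l1 i}
      = ∏ i, k.choose (l1 i) := by
  rw [Fintype.card_congr (Equiv.subtypePiEquivPi (p := fun i (s : Finset (Fin k)) => s.card = l1 i))]
  rw [Fintype.card_pi]
  exact Finset.prod_congr rfl fun i _ => card_cardsets (l1 i)


lemma prof_eq_iff {π : Fin n → Fin k → Option (Bool × Fin k)}
    {l : (Fin n → Fin (k + 1)) × (Fin n → Fin (k + 1))} :
    profF π = l ↔ ∀ i, (img false (π i)).card = (l.1 i : ℕ)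
      ∧ (img true (π i)).card = (l.2 i : ℕ) := by
  rw [Prod.ext_iff]
  simp only [profF, funext_iff, Fin.ext_iff]
  constructor
  · rintro ⟨h1, h2⟩ i
    exact ⟨h1 i, h2 i⟩
  · intro h
    exact ⟨fun i => (h i).1, fun i => (h i).2⟩

lemma count_fiber (l : (Fin n → Fin (k + 1)) × (Fin n → Fin (k + 1))) :
    (univ.filter fun π : Fin n → Fin k → Option (Bool × Fin k) =>
        Good π ∧ profF π = l).card
      = ∏ i, k.choose (l.1 i : ℕ) *
          ((k - (l.1 (i + 1) : ℕ)).choose (l.2 i : ℕ) *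
            Nat.descFactorial k ((l.1 i : ℕ) + (l.2 i : ℕ))) := by
  classical
  rw [← Fintype.card_subtype]
  have Φ := Equiv.sigmaFiberEquiv (f := fun s : {π : Fin n → Fin k → Option (Bool × Fin k) //
      Good π ∧ profF π = l} =>
    (⟨fun i => img false (s.1 i), fun i => ((prof_eq_iff.1 s.2.2) i).1⟩ :
      {Q : Fin n → Finset (Fin k) // ∀ i, (Q i).card = (l.1 i : ℕ)}))
  rw [← Fintype.card_congr Φ, Fintype.card_sigma]
  have hfib : ∀ Q : {Q : Fin n → Finset (Fin k) // ∀ i, (Q i).card = (l.1 i : ℕ)},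
      Fintype.card {s : {π : Fin n → Fin k → Option (Bool × Fin k) //
          Good π ∧ profF π = l} //
          (⟨fun i => img false (s.1 i), fun i => ((prof_eq_iff.1 s.2.2) i).1⟩ :
            {Q : Fin n → Finset (Fin k) // ∀ i, (Q i).card = (l.1 i : ℕ)}) = Q}
        = ∏ i, (k - (l.1 (i + 1) : ℕ)).choose (l.2 i : ℕ) *
            Nat.descFactorial k ((l.1 i : ℕ) + (l.2 i : ℕ)) := by
    intro Q
    have equ : {s : {π : Fin n → Fin k → Option (Bool × Fin k) //
          Good π ∧ profF π = l} //
          (⟨fun i => img false (s.1 i), fun i => ((prof_eq_iff.1 s.2.2) i).1⟩ :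
            {Q : Fin n → Finset (Fin k) // ∀ i, (Q i).card = (l.1 i : ℕ)}) = Q}
        ≃ ∀ i, {g : Fin k → Option (Bool × Fin k) //
            img false g = Q.1 i ∧ injC false g ∧ img true g ⊆ (Q.1 (i + 1))ᶜ ∧ injC true g ∧
              (img true g).card = (l.2 i : ℕ)} := by
      refine ⟨fun s i => ⟨s.1.1 i, ?_, ?_, ?_, ?_, ?_⟩, fun F => ⟨⟨fun i => (F i).1, ?_, ?_⟩, ?_⟩,
        fun s => Subtype.ext (Subtype.ext rfl), fun F => funext fun i => Subtype.ext rfl⟩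
      · exact congrFun (congrArg Subtype.val s.2) i
      · exact ((good_iff _).1 s.1.2.1 i).1
      · intro q hq
        rw [Finset.mem_compl, ← congrFun (congrArg Subtype.val s.2) (i + 1)]
        exact ((good_iff _).1 s.1.2.1 i).2.2 q hq
      · exact ((good_iff _).1 s.1.2.1 i).2.1
      · exact ((prof_eq_iff.1 s.1.2.2) i).2
      · refine (good_iff _).2 fun i => ⟨(F i).2.2.1, (F i).2.2.2.2.1, fun q hq hq' => ?_⟩
        have h1 : q ∈ (Q.1 (i + 1))ᶜ := (F i).2.2.2.1 hq
        rw [Finset.mem_compl] at h1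
        rw [(F (i + 1)).2.1] at hq'
        exact h1 hq'
      · refine prof_eq_iff.2 fun i => ⟨?_, (F i).2.2.2.2.2⟩
        rw [(F i).2.1]
        exact Q.2 i
      · exact Subtype.ext (funext fun i => (F i).2.1)
    rw [Fintype.card_congr equ, Fintype.card_pi]
    refine Finset.prod_congr rfl fun i _ => ?_
    rw [card_BL]
    congr 2
    · rw [Finset.card_compl, Q.2 (i + 1), Fintype.card_fin]
    · rw [Q.2 i]
  rw [Finset.sum_congr rfl (fun Q _ => hfib Q), Finset.sum_const, Finset.card_univ,
    card_Qfam, smul_eq_mul, ← Finset.prod_mul_distrib]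


open Kronecker

lemma entry (a0 a1 : R) (a c : Fin n × Fin k) :
    ((a0 • (1 : Matrix (Fin n) (Fin n) R) + a1 • Pcirc R n) ⊗ₖ
        (Matrix.of fun (_ : Fin k) (_ : Fin k) => (1 : R))) a c
      = (if c.1 = a.1 then a0 else 0) + (if c.1 = a.1 + 1 then a1 else 0) := by
  obtain ⟨i, p⟩ := a
  obtain ⟨j, q⟩ := c
  have h1 : (1 : Matrix (Fin n) (Fin n) R) i j = if j = i then (1 : R) else 0 := by
    rw [Matrix.one_apply]
    exact if_congr eq_comm rfl rfl
  simp only [Matrix.kroneckerMap_apply, Matrix.add_apply, Matrix.smul_apply, h1, Pcirc,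
    Matrix.of_apply, smul_eq_mul, mul_ite, mul_one, mul_zero]

noncomputable def Psi (z : Σ S : Finset (Fin n × Fin k),
    ({a // a ∈ S} ↪ Fin n × Fin k) × Finset {a // a ∈ S}) :
    Fin n → Fin k → Option (Bool × Fin k) :=
  fun i p => if h : (i, p) ∈ z.1 then
      some (!(decide (⟨(i, p), h⟩ ∈ z.2.2)), (z.2.1 ⟨(i, p), h⟩).2)
    else none

noncomputable def fTerm (x a0 a1 : R) (z : Σ S : Finset (Fin n × Fin k),
    ({a // a ∈ S} ↪ Fin n × Fin k) × Finset {a // a ∈ S}) : R :=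
  (∏ a ∈ z.2.2, if (z.2.1 a).1 = a.1.1 then x * a0 else 0) *
    ∏ a ∈ z.2.2ᶜ, if (z.2.1 a).1 = a.1.1 + 1 then x * a1 else 0

def Cond (z : Σ S : Finset (Fin n × Fin k),
    ({a // a ∈ S} ↪ Fin n × Fin k) × Finset {a // a ∈ S}) : Prop :=
  ∀ a : {a // a ∈ z.1}, (a ∈ z.2.2 → (z.2.1 a).1 = a.1.1) ∧
    (a ∉ z.2.2 → (z.2.1 a).1 = a.1.1 + 1)

lemma cond_of_ne {x a0 a1 : R} {z : Σ S : Finset (Fin n × Fin k),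
    ({a // a ∈ S} ↪ Fin n × Fin k) × Finset {a // a ∈ S}}
    (hz : fTerm x a0 a1 z ≠ 0) : Cond z := by
  intro a
  constructor
  · intro haT
    by_contra hne
    have hp : (∏ a ∈ z.2.2, if (z.2.1 a).1 = a.1.1 then x * a0 else 0) = 0 :=
      Finset.prod_eq_zero haT (if_neg hne)
    exact hz (by rw [fTerm, hp, zero_mul])
  · intro haT
    by_contra hne
    have hp : (∏ a ∈ z.2.2ᶜ, if (z.2.1 a).1 = a.1.1 + 1 then x * a1 else 0) = 0 :=
      Finset.prod_eq_zero (Finset.mem_compl.2 haT) (if_neg hne)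
    exact hz (by rw [fTerm, hp, mul_zero])

lemma psi_mem (z : Σ S : Finset (Fin n × Fin k),
    ({a // a ∈ S} ↪ Fin n × Fin k) × Finset {a // a ∈ S}) (a : {a // a ∈ z.1}) :
    Psi z a.1.1 a.1.2 = some (!(decide (a ∈ z.2.2)), (z.2.1 a).2) := by
  unfold Psi
  rw [dif_pos (show (a.1.1, a.1.2) ∈ z.1 from a.2)]

lemma psi_not_mem {z : Σ S : Finset (Fin n × Fin k),
    ({a // a ∈ S} ↪ Fin n × Fin k) × Finset {a // a ∈ S}} {i : Fin n} {p : Fin k}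
    (h : (i, p) ∉ z.1) : Psi z i p = none := dif_neg h

lemma gmap_psi {z : Σ S : Finset (Fin n × Fin k),
    ({a // a ∈ S} ↪ Fin n × Fin k) × Finset {a // a ∈ S}} (hc : Cond z)
    (a : Fin n × Fin k) :
    Gmap (Psi z) a = if h : a ∈ z.1 then some (z.2.1 ⟨a, h⟩) else none := by
  obtain ⟨i, p⟩ := a
  by_cases h : (i, p) ∈ z.1
  · rw [dif_pos h]
    have hm : Gmap (Psi z) (i, p) = (Psi z i p).map (colOf i) := rfl
    rw [hm, psi_mem z ⟨(i, p), h⟩]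
    simp only [Option.map_some]
    congr 1
    by_cases hT : (⟨(i, p), h⟩ : {a // a ∈ z.1}) ∈ z.2.2
    · have h1 := (hc ⟨(i, p), h⟩).1 hT
      simp only [colOf, hT, decide_true, Bool.not_true, if_neg (Bool.false_ne_true)]
      exact Prod.ext_iff.2 ⟨h1.symm, rfl⟩
    · have h1 := (hc ⟨(i, p), h⟩).2 hT
      simp only [colOf, hT, decide_false, Bool.not_false, if_pos rfl]
      exact Prod.ext_iff.2 ⟨h1.symm, rfl⟩
  · rw [dif_neg h]
    have hm : Gmap (Psi z) (i, p) = (Psi z i p).map (colOf i) := rfl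
    rw [hm, psi_not_mem h]
    rfl

lemma good_psi {z : Σ S : Finset (Fin n × Fin k),
    ({a // a ∈ S} ↪ Fin n × Fin k) × Finset {a // a ∈ S}} (hc : Cond z) :
    Good (Psi z) := by
  intro a b c h1 h2
  rw [gmap_psi hc] at h1 h2
  by_cases ha : a ∈ z.1
  · by_cases hb : b ∈ z.1
    · rw [dif_pos ha] at h1
      rw [dif_pos hb] at h2
      have := z.2.1.injective (Option.some.inj (h1.trans h2.symm))
      exact congrArg Subtype.val this
    · rw [dif_neg hb] at h2
      cases h2
  · rw [dif_neg ha] at h1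
    cases h1

lemma w_psi {x a0 a1 : R} {z : Σ S : Finset (Fin n × Fin k),
    ({a // a ∈ S} ↪ Fin n × Fin k) × Finset {a // a ∈ S}} (hc : Cond z) :
    fTerm x a0 a1 z = W x a0 a1 (Psi z) := by
  have hW : W x a0 a1 (Psi z) = ∏ a : Fin n × Fin k, wfac x a0 a1 (Psi z a.1 a.2) := by
    unfold W
    exact (Fintype.prod_prod_type' (fun i p => wfac x a0 a1 (Psi z i p))).symm
  rw [hW]
  rw [← Finset.prod_subset (Finset.subset_univ z.1)
    (fun a _ ha => by rw [show Psi z a.1 a.2 = none from psi_not_mem ha]; rfl)]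
  rw [← Finset.prod_coe_sort (f := fun a => wfac x a0 a1 (Psi z a.1 a.2)) (s := z.1)]
  rw [← Finset.prod_mul_prod_compl z.2.2 (fun a => wfac x a0 a1 (Psi z a.1.1 a.1.2))]
  unfold fTerm
  congr 1
  · refine Finset.prod_congr rfl fun a haT => ?_
    rw [if_pos ((hc a).1 haT), psi_mem z a]
    simp [wfac, haT]
  · refine Finset.prod_congr rfl fun a haT => ?_
    rw [Finset.mem_compl] at haT
    rw [if_pos ((hc a).2 haT), psi_mem z a]
    simp [wfac, haT]


lemma stepA (x a0 a1 : R) :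
    rookPoly x ((a0 • (1 : Matrix (Fin n) (Fin n) R) + a1 • Pcirc R n) ⊗ₖ
        (Matrix.of fun (_ : Fin k) (_ : Fin k) => (1 : R)))
      = ∑ π ∈ univ.filter (fun π : Fin n → Fin k → Option (Bool × Fin k) => Good π),
          W x a0 a1 π := by
  classical
  unfold rookPoly
  have h1 : ∀ S : Finset (Fin n × Fin k), ∀ σ : {a // a ∈ S} ↪ Fin n × Fin k,
      (x ^ S.card * ∏ a : {a // a ∈ S},
        ((a0 • (1 : Matrix (Fin n) (Fin n) R) + a1 • Pcirc R n) ⊗ₖ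
          (Matrix.of fun (_ : Fin k) (_ : Fin k) => (1 : R))) a.1 (σ a))
        = ∑ T : Finset {a // a ∈ S}, fTerm x a0 a1 ⟨S, σ, T⟩ := by
    intro S σ
    have hx : x ^ S.card = ∏ _a : {a // a ∈ S}, x := by
      rw [Finset.prod_const, Finset.card_univ, Fintype.card_coe]
    rw [hx, ← Finset.prod_mul_distrib]
    have hfac : ∀ a : {a // a ∈ S},
        x * (((a0 • (1 : Matrix (Fin n) (Fin n) R) + a1 • Pcirc R n) ⊗ₖ
          (Matrix.of fun (_ : Fin k) (_ : Fin k) => (1 : R))) a.1 (σ a))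
          = (if (σ a).1 = a.1.1 then x * a0 else 0)
            + (if (σ a).1 = a.1.1 + 1 then x * a1 else 0) := by
      intro a
      rw [entry, mul_add, mul_ite, mul_zero, mul_ite, mul_zero]
    rw [Finset.prod_congr rfl fun a _ => hfac a, Finset.prod_add, Finset.powerset_univ]
    refine Finset.sum_congr rfl fun T _ => ?_
    rw [fTerm, ← Finset.compl_eq_univ_sdiff]
  refine Eq.trans (Finset.sum_congr rfl fun S _ => Finset.sum_congr rfl fun σ _ => h1 S σ) ?_
  refine Eq.trans (Finset.sum_congr rfl fun S _ =>
    (Fintype.sum_prod_type (fun c : ({a // a ∈ S} ↪ Fin n × Fin k) × Finset {a // a ∈ S} =>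
      fTerm x a0 a1 ⟨S, c⟩)).symm) ?_
  refine Eq.trans (Finset.sum_sigma' univ _ (fun S c => fTerm x a0 a1 ⟨S, c⟩)) ?_
  refine Finset.sum_bij_ne_zero (fun z _ _ => Psi z) ?_ ?_ ?_ ?_
  · intro z _ hz
    exact Finset.mem_filter.2 ⟨Finset.mem_univ _, good_psi (cond_of_ne hz)⟩
  · rintro ⟨S1, σ1, T1⟩ h1' hz1 ⟨S2, σ2, T2⟩ h2' hz2 heq0
    have heq : Psi ⟨S1, (σ1, T1)⟩ = Psi ⟨S2, (σ2, T2)⟩ := heq0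
    clear heq0
    have hc1 := cond_of_ne hz1
    have hc2 := cond_of_ne hz2
    have hS : S1 = S2 := by
      ext a
      obtain ⟨i, p⟩ := a
      constructor
      · intro ha
        by_contra hb
        have e1 := psi_mem ⟨S1, σ1, T1⟩ ⟨(i, p), ha⟩
        rw [heq] at e1
        rw [psi_not_mem hb] at e1
        cases e1
      · intro ha
        by_contra hb
        have e1 := psi_mem ⟨S2, σ2, T2⟩ ⟨(i, p), ha⟩
        rw [← heq] at e1
        rw [psi_not_mem hb] at e1
        cases e1
    subst hS
    have heq2 : Psi ⟨S1, (σ1, T1)⟩ = Psi ⟨S1, (σ2, T2)⟩ := heq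
    have hT : T1 = T2 := by
      ext a
      have e1 := psi_mem ⟨S1, σ1, T1⟩ a
      have e2 := psi_mem ⟨S1, σ2, T2⟩ a
      rw [heq2] at e1
      have hb := Option.some.inj (e2.symm.trans e1)
      have hb1 : (!decide (a ∈ T2)) = (!decide (a ∈ T1)) := congrArg Prod.fst hb
      have : (a ∈ T2) ↔ (a ∈ T1) := by simpa using hb1
      exact this.symm
    subst hT
    have heq3 : Psi ⟨S1, (σ1, T1)⟩ = Psi ⟨S1, (σ2, T1)⟩ := heq
    have hσ : σ1 = σ2 := by
      apply DFunLike.ext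
      intro a
      have e1 := gmap_psi hc1 a.1
      have e2 := gmap_psi hc2 a.1
      rw [show Gmap (Psi ⟨S1, (σ1, T1)⟩) = Gmap (Psi ⟨S1, (σ2, T1)⟩) from congrArg Gmap heq3] at e1
      rw [dif_pos a.2] at e1 e2
      exact Option.some.inj (e1.symm.trans e2)
    subst hσ
    rfl
  · intro π hπ hWne
    have hG : Good π := (Finset.mem_filter.1 hπ).2
    set S : Finset (Fin n × Fin k) := univ.filter (fun a => (π a.1 a.2).isSome) with hSdef
    have hmem : ∀ a : {a // a ∈ S}, (π a.1.1 a.1.2).isSome := fun a => (Finset.mem_filter.1 a.2).2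
    set σf : {a // a ∈ S} → Fin n × Fin k :=
      fun a => colOf a.1.1 ((π a.1.1 a.1.2).get (hmem a)) with hσdef
    have hgm : ∀ a : {a // a ∈ S}, Gmap π a.1 = some (σf a) := by
      intro a
      show (π a.1.1 a.1.2).map (colOf a.1.1) = _
      conv_lhs => rw [← Option.some_get (hmem a)]
      rfl
    have hσinj : Function.Injective σf := by
      intro a b hab
      have ha1 := hgm a
      have hb1 := hgm b
      rw [hab] at ha1
      exact Subtype.ext (hG a.1 b.1 (σf b) ha1 hb1)
    set Tf : Finset {a // a ∈ S} :=
      univ.filter (fun a => ((π a.1.1 a.1.2).get (hmem a)).1 = false) with hTdef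
    set z : Σ S : Finset (Fin n × Fin k),
        ({a // a ∈ S} ↪ Fin n × Fin k) × Finset {a // a ∈ S} := ⟨S, ⟨σf, hσinj⟩, Tf⟩ with hzdef
    have hPsi : Psi z = π := by
      funext i p
      by_cases h : (i, p) ∈ S
      · rw [psi_mem z ⟨(i, p), h⟩]
        have hs : (π i p).isSome := (Finset.mem_filter.1 h).2
        obtain ⟨⟨ε, q⟩, hc⟩ := Option.isSome_iff_exists.1 hs
        have hget : (π i p).get (hmem ⟨(i, p), h⟩) = (ε, q) := by simp [hc]
        rw [hc]
        have hmemT : ((⟨(i, p), h⟩ : {a // a ∈ S}) ∈ Tf) ↔ (ε = false) := by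
          simp only [hTdef, Finset.mem_filter, Finset.mem_univ, true_and]
          rw [hget]
        refine congrArg some (Prod.ext_iff.2 ⟨?_, ?_⟩)
        · cases ε
          · have hmm : (⟨(i, p), h⟩ : {a // a ∈ S}) ∈ Tf := hmemT.2 rfl
            simp [show (⟨(i, p), h⟩ : {a // a ∈ S}) ∈ z.snd.2 from hmm]
          · have hmm : (⟨(i, p), h⟩ : {a // a ∈ S}) ∉ Tf := fun hmm => by cases hmemT.1 hmm
            simp [show (⟨(i, p), h⟩ : {a // a ∈ S}) ∉ z.snd.2 from hmm]
        · show (σf ⟨(i, p), h⟩).2 = q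
          rw [hσdef]
          simp only [colOf, hget]
      · have hn : π i p = none := Option.not_isSome_iff_eq_none.1
          (fun hs => h (Finset.mem_filter.2 ⟨Finset.mem_univ _, hs⟩))
        rw [hn]
        exact psi_not_mem h
    have hCz : Cond z := by
      intro a
      constructor
      · intro haT
        have hf : ((π a.1.1 a.1.2).get (hmem a)).1 = false := (Finset.mem_filter.1 haT).2
        show (colOf a.1.1 ((π a.1.1 a.1.2).get (hmem a))).1 = a.1.1
        simp [colOf, hf]
      · intro haT
        have hne : ¬((π a.1.1 a.1.2).get (hmem a)).1 = false :=
          fun hf => haT (Finset.mem_filter.2 ⟨Finset.mem_univ _, hf⟩)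
        have ht : ((π a.1.1 a.1.2).get (hmem a)).1 = true := by simpa using hne
        show (colOf a.1.1 ((π a.1.1 a.1.2).get (hmem a))).1 = a.1.1 + 1
        simp [colOf, ht]
    have hfW : fTerm x a0 a1 z = W x a0 a1 π := by rw [w_psi hCz, hPsi]
    exact ⟨z, Finset.mem_sigma.2 ⟨Finset.mem_univ _, Finset.mem_univ _⟩,
      by rw [hfW]; exact hWne, hPsi⟩
  · intro z _ hz
    exact w_psi (cond_of_ne hz)

end RookAux

theorem stmt2 {R : Type*} [CommRing R] (n k : ℕ) [NeZero n] (hk : 1 ≤ k) (a0 a1 x : R) :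
    rookPoly x ((a0 • (1 : Matrix (Fin n) (Fin n) R) + a1 • Pcirc R n) ⊗ₖ
        (Matrix.of fun (_ : Fin k) (_ : Fin k) => (1 : R))) =
      ∑ l : (Fin n → Fin (k + 1)) × (Fin n → Fin (k + 1)),
        if ∀ i : Fin n, (l.2 i : ℕ) ≤ min (k - (l.1 i : ℕ)) (k - (l.1 (i + 1) : ℕ)) then
          (∏ i : Fin n,
              (Nat.choose k (l.1 i : ℕ) : R) *
                (Nat.choose (k - (l.1 (i + 1) : ℕ)) (l.2 i : ℕ) : R) *
                (Nat.choose k ((l.1 i : ℕ) + (l.2 i : ℕ)) : R) *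
                (Nat.factorial ((l.1 i : ℕ) + (l.2 i : ℕ)) : R)) *
            a0 ^ (∑ i : Fin n, (l.1 i : ℕ)) * a1 ^ (∑ i : Fin n, (l.2 i : ℕ)) *
            x ^ (∑ i : Fin n, ((l.1 i : ℕ) + (l.2 i : ℕ)))
        else 0 := by
  classical
  rw [RookAux.stepA x a0 a1, RookAux.grouping x a0 a1]
  refine Finset.sum_congr rfl fun l _ => ?_
  rw [RookAux.count_fiber l]
  by_cases hcond : ∀ i : Fin n, (l.2 i : ℕ) ≤ min (k - (l.1 i : ℕ)) (k - (l.1 (i + 1) : ℕ))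
  · rw [if_pos hcond]
    have hcoef : ((∏ i, k.choose (l.1 i : ℕ) *
          ((k - (l.1 (i + 1) : ℕ)).choose (l.2 i : ℕ) *
            Nat.descFactorial k ((l.1 i : ℕ) + (l.2 i : ℕ))) : ℕ) : R)
        = ∏ i : Fin n, (Nat.choose k (l.1 i : ℕ) : R) *
            (Nat.choose (k - (l.1 (i + 1) : ℕ)) (l.2 i : ℕ) : R) *
            (Nat.choose k ((l.1 i : ℕ) + (l.2 i : ℕ)) : R) *
            (Nat.factorial ((l.1 i : ℕ) + (l.2 i : ℕ)) : R) := by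
      rw [Nat.cast_prod]
      refine Finset.prod_congr rfl fun i _ => ?_
      rw [Nat.descFactorial_eq_factorial_mul_choose]
      push_cast
      ring
    rw [hcoef]
    have hmono : RookAux.monoF x a0 a1 l = a0 ^ (∑ i, (l.1 i : ℕ)) * a1 ^ (∑ i, (l.2 i : ℕ)) *
        x ^ (∑ i : Fin n, ((l.1 i : ℕ) + (l.2 i : ℕ))) := by
      unfold RookAux.monoF
      rw [Finset.prod_mul_distrib, Finset.prod_pow_eq_pow_sum, Finset.prod_pow_eq_pow_sum,
        Finset.sum_add_distrib, pow_add, mul_pow, mul_pow]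
      ring
    rw [hmono]
    ring
  · rw [if_neg hcond]
    push_neg at hcond
    obtain ⟨i0, hi0⟩ := hcond
    have hzero : (∏ i, k.choose (l.1 i : ℕ) *
        ((k - (l.1 (i + 1) : ℕ)).choose (l.2 i : ℕ) *
          Nat.descFactorial k ((l.1 i : ℕ) + (l.2 i : ℕ)))) = 0 := by
      apply Finset.prod_eq_zero (Finset.mem_univ i0)
      rcases min_lt_iff.1 hi0 with h' | h'
      · have hl1 : (l.1 i0 : ℕ) ≤ k := Nat.lt_succ_iff.1 (l.1 i0).isLt
        have hlt : k < (l.1 i0 : ℕ) + (l.2 i0 : ℕ) := by omega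
        rw [Nat.descFactorial_eq_zero_iff_lt.2 hlt, mul_zero, mul_zero]
      · rw [Nat.choose_eq_zero_of_lt h', zero_mul, mul_zero]
    rw [hzero]
    simp
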